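/- Let W : V → ℂ be a polynomial on a finite-dimensional ℂ-vector space V, quasi-homogeneous of degree d with respect to a G_m-action on V with all weights positive, and suppose W has no critical points on V ∖ {0} (W is non-degenerate). Then for γ ∈ GL(V) a finite-order symmetry of W commuting with the G_m-action, the restriction W_γ = W|_{V^γ} to the fixed subspace V^γ also has no critical points on V^γ ∖ {0}. -/

import Mathlib

/-!
STATEMENT 14: Let `W` be a polynomial on `V = ℂⁿ`, quasi-homogeneous of degree `d` for a
`G_m`-action with positive weights `w`, with no critical points on `V ∖ {0}`.  If
`γ ∈ GL(V)` is a finite-order symmetry of `W` commuting with the `G_m`-action, then the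
restriction `W|_{V^γ}` to the fixed subspace has no critical points on `V^γ ∖ {0}`.

A critical point of `W|_{V^γ}` at `x ∈ V^γ` means that all directional derivatives
`∑ᵢ (∂ᵢW)(x) · vᵢ` vanish for directions `v ∈ V^γ`.
-/

open MvPolynomial

lemma evalLine (n : ℕ) (W : MvPolynomial (Fin n) ℂ) (x v : Fin n → ℂ) (t : ℂ) :
    Polynomial.eval t (aeval (fun i => Polynomial.C (x i) + Polynomial.X * Polynomial.C (v i)) W)
      = eval (fun i => x i + t * v i) W := by
  induction W using MvPolynomial.induction_on with
  | C a => simp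
  | add p q hp hq => simp only [map_add, Polynomial.eval_add, hp, hq, eval_add]
  | mul_X p i hp =>
    simp only [map_mul, aeval_X, Polynomial.eval_mul, Polynomial.eval_add, Polynomial.eval_C,
      Polynomial.eval_X, hp, eval_mul, eval_X]

lemma dirDeriv (n : ℕ) (W : MvPolynomial (Fin n) ℂ) (x v : Fin n → ℂ) :
    Polynomial.eval 0 (Polynomial.derivative
      (aeval (fun i => Polynomial.C (x i) + Polynomial.X * Polynomial.C (v i)) W))
      = ∑ i, eval x (pderiv i W) * v i := by
  induction W using MvPolynomial.induction_on with
  | C a => simp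
  | add p q hp hq =>
    simp only [map_add, Polynomial.derivative_add, Polynomial.eval_add, hp, hq, eval_add,
      add_mul, Finset.sum_add_distrib]
  | mul_X p j hp =>
    have h0 : Polynomial.eval 0 (aeval (fun i => Polynomial.C (x i) + Polynomial.X * Polynomial.C (v i)) p) = eval x p := by
      simpa using evalLine n p x v 0
    rw [map_mul, aeval_X, Polynomial.derivative_mul]
    simp only [Polynomial.derivative_add, Polynomial.derivative_C, Polynomial.derivative_mul,
      Polynomial.derivative_X, Polynomial.eval_add, Polynomial.eval_mul, Polynomial.eval_C,
      Polynomial.eval_X, Polynomial.eval_zero, Polynomial.eval_one, hp, h0, zero_add, one_mul,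
      mul_zero, add_zero, zero_mul]
    have hR : ∀ i, eval x (pderiv i (p * X j)) * v i
        = eval x (pderiv i p) * v i * x j + (if i = j then eval x p * v i else 0) := by
      intro i
      classical
      rw [pderiv_mul, eval_add, eval_mul, eval_mul, eval_X, pderiv_X]
      by_cases h : i = j
      · subst h; simp; ring
      · simp [Pi.single_apply, h]; ring
    rw [Finset.sum_congr rfl fun i _ => hR i, Finset.sum_add_distrib, ← Finset.sum_mul]
    classical
    rw [Finset.sum_ite_eq' Finset.univ j (fun i => eval x p * v i)]
    simp

lemma keyEquiv (n : ℕ) (W : MvPolynomial (Fin n) ℂ)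
    (γ : (Fin n → ℂ) ≃ₗ[ℂ] (Fin n → ℂ))
    (hsym : ∀ x : Fin n → ℂ, eval (γ x) W = eval x W)
    (x : Fin n → ℂ) (hx : γ x = x) (v : Fin n → ℂ) :
    ∑ i, eval x (pderiv i W) * γ v i = ∑ i, eval x (pderiv i W) * v i := by
  rw [← dirDeriv n W x (γ v), ← dirDeriv n W x v]
  refine congrArg (fun p => Polynomial.eval 0 (Polynomial.derivative p)) ?_
  apply Polynomial.funext
  intro t
  rw [evalLine, evalLine]
  have harg : (fun i => x i + t * γ v i) = γ (x + t • v) := by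
    rw [map_add, map_smul, hx]; funext i; simp [mul_comm]
  have harg2 : (fun i => x i + t * v i) = x + t • v := by
    funext i; simp [mul_comm]
  rw [harg, harg2, hsym]

theorem stmt14
    (n : ℕ) (w : Fin n → ℕ) (hw : ∀ i, 0 < w i) (d : ℕ)
    (W : MvPolynomial (Fin n) ℂ)
    -- quasi-homogeneity of degree d for the weights w
    (hW : ∀ (t : ℂ) (x : Fin n → ℂ),
      eval (fun i => t ^ w i * x i) W = t ^ d * eval x W)
    -- non-degeneracy: no critical points away from 0
    (hnd : ∀ x : Fin n → ℂ, (∀ i, eval x (pderiv i W) = 0) → x = 0)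
    -- γ, a finite-order linear symmetry of W commuting with the G_m-action
    (γ : (Fin n → ℂ) ≃ₗ[ℂ] (Fin n → ℂ))
    (hfin : ∃ k : ℕ, 0 < k ∧ γ ^ k = 1)
    (hsym : ∀ x : Fin n → ℂ, eval (γ x) W = eval x W)
    (hγcomm : ∀ (t : ℂ) (x : Fin n → ℂ),
      γ (fun i => t ^ w i * x i) = fun i => t ^ w i * γ x i) :
    ∀ x : Fin n → ℂ, γ x = x →
      (∀ v : Fin n → ℂ, γ v = v → ∑ i, eval x (pderiv i W) * v i = 0) →
      x = 0 := by
  intro x hx H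
  obtain ⟨k, hk, hγk⟩ := hfin
  let g : (Fin n → ℂ) →ₗ[ℂ] ℂ :=
  { toFun := fun v => ∑ i, eval x (pderiv i W) * v i
    map_add' := by intro a b; simp [mul_add, Finset.sum_add_distrib]
    map_smul' := by intro c a; simp [Finset.mul_sum]; ring_nf; simp [mul_comm, mul_assoc, mul_left_comm] }
  have key : ∀ v, g (γ v) = g v := fun v => keyEquiv n W γ hsym x hx v
  have gpow : ∀ (j : ℕ) (v : Fin n → ℂ), g ((γ ^ j) v) = g v := by
    intro j
    induction j with
    | zero => intro v; simp
    | succ j ih =>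
      intro v
      have : (γ ^ (j + 1)) v = (γ ^ j) (γ v) := by
        rw [pow_succ]; rfl
      rw [this, ih, key]
  have gzero : ∀ v, g v = 0 := by
    intro v
    set Pv : Fin n → ℂ := (k : ℂ)⁻¹ • ∑ j ∈ Finset.range k, (γ ^ j) v with hPv
    have hshift : ∑ j ∈ Finset.range k, (γ ^ (j + 1)) v = ∑ j ∈ Finset.range k, (γ ^ j) v := by
      have h1 : ∑ j ∈ Finset.range (k + 1), (γ ^ j) v
          = (∑ j ∈ Finset.range k, (γ ^ (j + 1)) v) + (γ ^ 0) v := Finset.sum_range_succ' _ _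
      have h2 : ∑ j ∈ Finset.range (k + 1), (γ ^ j) v
          = (∑ j ∈ Finset.range k, (γ ^ j) v) + (γ ^ k) v := Finset.sum_range_succ _ _
      have h3 : (γ ^ k) v = v := by rw [hγk]; rfl
      have h4 : (γ ^ 0) v = v := rfl
      rw [h3] at h2; rw [h4] at h1
      have := h1.symm.trans h2
      exact add_right_cancel this
    have hfix : γ Pv = Pv := by
      rw [hPv, map_smul, map_sum]
      congr 1
      calc ∑ j ∈ Finset.range k, γ ((γ ^ j) v)
          = ∑ j ∈ Finset.range k, (γ ^ (j + 1)) v := by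
            refine Finset.sum_congr rfl fun j _ => ?_
            rw [pow_succ']; rfl
        _ = ∑ j ∈ Finset.range k, (γ ^ j) v := hshift
    have hgPv : g Pv = g v := by
      rw [hPv, map_smul, map_sum]
      have : ∑ j ∈ Finset.range k, g ((γ ^ j) v) = k * g v := by
        rw [Finset.sum_congr rfl fun j _ => gpow j v]
        simp [Finset.sum_const, nsmul_eq_mul]
      rw [this]
      field_simp
      rw [smul_eq_mul, one_div, ← mul_assoc, inv_mul_cancel₀ (Nat.cast_ne_zero.mpr hk.ne'), one_mul]
    have := H Pv hfix
    rw [← hgPv]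
    exact this
  apply hnd
  intro i
  have := gzero (Pi.single i 1)
  simpa [g, Pi.single_apply, Finset.sum_ite_eq', mul_comm] using this
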